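/- Let f : C₀• → C₁• be a morphism of bounded complexes of Hilbert spaces (with closed densely defined differentials) such that C₀• is acyclic with closed ranges. Then the mapping cone cone(f)• is isomorphic as a complex to the direct sum C₀•[1] ⊕ C₁•. -/

import Mathlib

/-- **Splitting of the mapping cone over an acyclic Hilbert complex.**
Let `f : C₀• → C₁•` be a morphism of bounded complexes of Hilbert spaces with
closed densely defined differentials, and suppose `C₀•` is acyclic with closed
ranges.  Then the mapping cone `cone(f)ⁿ = C₀ⁿ⁺¹ × C₁ⁿ`, with differential
`(x, y) ↦ (-d₀ x, f x + d₁ y)`, is isomorphic as a complex of Hilbert spaces to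
the direct sum complex `C₀•[1] ⊕ C₁•`, whose differential is
`(x, y) ↦ (-d₀ x, d₁ y)`. -/
theorem cone_splits_over_acyclic
    (C₀ C₁ : ℤ → Type*)
    [∀ n, NormedAddCommGroup (C₀ n)] [∀ n, InnerProductSpace ℝ (C₀ n)]
    [∀ n, CompleteSpace (C₀ n)]
    [∀ n, NormedAddCommGroup (C₁ n)] [∀ n, InnerProductSpace ℝ (C₁ n)]
    [∀ n, CompleteSpace (C₁ n)]
    (d₀ : ∀ n : ℤ, C₀ n →ₗ.[ℝ] C₀ (n + 1))
    (d₁ : ∀ n : ℤ, C₁ n →ₗ.[ℝ] C₁ (n + 1))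
    (hbounded : ∃ N : ℕ, ∀ n : ℤ, (N : ℤ) < |n| →
      Subsingleton (C₀ n) ∧ Subsingleton (C₁ n))
    (hclosed₀ : ∀ n, (d₀ n).IsClosed) (hclosed₁ : ∀ n, (d₁ n).IsClosed)
    (hdense₀ : ∀ n, Dense ((d₀ n).domain : Set (C₀ n)))
    (hdense₁ : ∀ n, Dense ((d₁ n).domain : Set (C₁ n)))
    -- `C₁•` is a complex: `d₁² = 0`
    (hsq₁ : ∀ n (y : (d₁ n).domain),
      ∃ h2 : (d₁ n) y ∈ (d₁ (n + 1)).domain, (d₁ (n + 1)) ⟨(d₁ n) y, h2⟩ = 0)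
    -- `C₀•` is acyclic with closed ranges: `Im(d₀ₙ) = Ker(d₀ₙ₊₁)`
    (hexact₀ : ∀ n, LinearMap.range (d₀ n).toFun =
      (LinearMap.ker (d₀ (n + 1)).toFun).map (d₀ (n + 1)).domain.subtype)
    -- `f` is a morphism of complexes: bounded, preserves domains, commutes with `d`
    (f : ∀ n : ℤ, C₀ n →L[ℝ] C₁ n)
    (hf : ∀ n (x : C₀ n) (hx : x ∈ (d₀ n).domain),
      ∃ h : f n x ∈ (d₁ n).domain,
        (d₁ n) ⟨f n x, h⟩ = f (n + 1) ((d₀ n) ⟨x, hx⟩)) :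
    -- the cone and the direct sum `C₀•[1] ⊕ C₁•` are isomorphic complexes:
    -- an isomorphism of the underlying graded Hilbert spaces preserving the
    -- (common) domains of the differentials in both directions and
    -- intertwining the cone differential with the direct-sum differential
    ∃ φ : ∀ n : ℤ, (C₀ (n + 1) × C₁ n) ≃L[ℝ] (C₀ (n + 1) × C₁ n),
      ∀ (n : ℤ) (x : C₀ (n + 1)) (y : C₁ n)
        (hx : x ∈ (d₀ (n + 1)).domain) (hy : y ∈ (d₁ n).domain),
        ∃ (hu : (φ n (x, y)).1 ∈ (d₀ (n + 1)).domain)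
          (hv : (φ n (x, y)).2 ∈ (d₁ n).domain),
          ((φ n).symm (x, y)).1 ∈ (d₀ (n + 1)).domain ∧
          ((φ n).symm (x, y)).2 ∈ (d₁ n).domain ∧
          φ (n + 1) (-(d₀ (n + 1)) ⟨x, hx⟩, f (n + 1) x + (d₁ n) ⟨y, hy⟩) =
            (-(d₀ (n + 1)) ⟨(φ n (x, y)).1, hu⟩, (d₁ n) ⟨(φ n (x, y)).2, hv⟩) := by
  classical
  choose hfdom hfcomm using hf
  -- the kernel of `d₀ n`, as a submodule of `C₀ n`
  let Z : ∀ n : ℤ, Submodule ℝ (C₀ n) := fun n =>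
    (LinearMap.ker (d₀ n).toFun).map (d₀ n).domain.subtype
  have memZ : ∀ (n : ℤ) (x : C₀ n),
      x ∈ Z n ↔ ∃ h : x ∈ (d₀ n).domain, d₀ n ⟨x, h⟩ = 0 := by
    intro n x
    simp only [Z, Submodule.mem_map, LinearMap.mem_ker]
    constructor
    · rintro ⟨⟨y, hy⟩, h0, rfl⟩
      exact ⟨hy, h0⟩
    · rintro ⟨h, h0⟩
      exact ⟨⟨x, h⟩, h0, rfl⟩
  -- `Z n` is closed
  have hZc : ∀ n, IsClosed (Z n : Set (C₀ n)) := by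
    intro n
    have he : (Z n : Set (C₀ n)) = (fun x : C₀ n => (x, (0 : C₀ (n + 1)))) ⁻¹'
        ((d₀ n).graph : Set (C₀ n × C₀ (n + 1))) := by
      ext x
      simp only [Set.mem_preimage, SetLike.mem_coe, LinearPMap.mem_graph_iff]
      rw [memZ]
      constructor
      · rintro ⟨h, h0⟩
        exact ⟨⟨x, h⟩, rfl, h0⟩
      · rintro ⟨⟨y, hy⟩, rfl, h0⟩
        exact ⟨hy, h0⟩
    rw [he]
    exact IsClosed.preimage (continuous_id.prodMk continuous_const) (hclosed₀ n)
  have hZcs : ∀ n, CompleteSpace (Z n) := fun n => (hZc n).completeSpace_coe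
  -- the orthogonal projection onto `Z n`
  let P : ∀ n : ℤ, C₀ n →L[ℝ] Z n := fun n =>
    letI := hZcs n
    Submodule.orthogonalProjectionOnto (Z n)
  -- the range of `d₀ n` is `Z (n + 1)`
  have hmemZ : ∀ (n : ℤ) (w : (d₀ n).domain), (d₀ n) w ∈ Z (n + 1) := by
    intro n w
    show (d₀ n) w ∈ (LinearMap.ker (d₀ (n + 1)).toFun).map (d₀ (n + 1)).domain.subtype
    rw [← hexact₀ n]
    exact LinearMap.mem_range_self _ w
  have hrange : ∀ (n : ℤ) (z : C₀ (n + 1)), z ∈ Z (n + 1) →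
      ∃ w : (d₀ n).domain, d₀ n w = z := by
    intro n z hz
    have hz' : z ∈ LinearMap.range (d₀ n).toFun := by
      rw [hexact₀ n]; exact hz
    obtain ⟨w, hw⟩ := hz'
    exact ⟨w, hw⟩
  -- existence of preimages orthogonal to the kernel
  have hex : ∀ (n : ℤ) (z : Z (n + 1)), ∃ w : C₀ n,
      ∃ hw : w ∈ (d₀ n).domain, w ∈ (Z n)ᗮ ∧ d₀ n ⟨w, hw⟩ = (z : C₀ (n + 1)) := by
    intro n z
    haveI := hZcs n
    obtain ⟨w, hw⟩ := hrange n z z.2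
    have haZ : ((P n w : Z n) : C₀ n) ∈ Z n := (P n (w : C₀ n)).2
    obtain ⟨hadom, had⟩ := (memZ n _).mp haZ
    have hsub : (w : C₀ n) - ↑(P n (w : C₀ n)) ∈ (d₀ n).domain := sub_mem w.2 hadom
    refine ⟨(w : C₀ n) - ↑(P n (w : C₀ n)), hsub, ?_, ?_⟩
    · exact Submodule.sub_starProjection_mem_orthogonal (K := Z n) (w : C₀ n)
    · have heq : (⟨(w : C₀ n) - ↑(P n (w : C₀ n)), hsub⟩ : (d₀ n).domain)
          = w - ⟨↑(P n (w : C₀ n)), hadom⟩ := by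
        apply Subtype.ext; simp
      rw [heq, LinearPMap.map_sub, had, hw, sub_zero]
  choose g hgdom hgperp hgd using hex
  -- uniqueness of such preimages
  have huniq : ∀ (n : ℤ) (z : Z (n + 1)) (w : C₀ n) (hw : w ∈ (d₀ n).domain),
      w ∈ (Z n)ᗮ → d₀ n ⟨w, hw⟩ = (z : C₀ (n + 1)) → w = g n z := by
    intro n z w hw hperp hd
    have hsub : w - g n z ∈ (d₀ n).domain := sub_mem hw (hgdom n z)
    have hd0 : d₀ n ⟨w - g n z, hsub⟩ = 0 := by
      have heq : (⟨w - g n z, hsub⟩ : (d₀ n).domain)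
          = ⟨w, hw⟩ - ⟨g n z, hgdom n z⟩ := by apply Subtype.ext; simp
      rw [heq, LinearPMap.map_sub, hd, hgd n z, sub_self]
    have h1 : w - g n z ∈ Z n := (memZ n _).mpr ⟨hsub, hd0⟩
    have h2 : w - g n z ∈ (Z n)ᗮ := sub_mem hperp (hgperp n z)
    have h3 : w - g n z = 0 :=
      inner_self_eq_zero.mp (Submodule.inner_right_of_mem_orthogonal h1 h2)
    exact sub_eq_zero.mp h3
  -- `g n` is linear
  have hgadd : ∀ (n : ℤ) (z w : Z (n + 1)), g n (z + w) = g n z + g n w := by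
    intro n z w
    symm
    have hmem : g n z + g n w ∈ (d₀ n).domain := add_mem (hgdom n z) (hgdom n w)
    refine huniq n (z + w) _ hmem (add_mem (hgperp n z) (hgperp n w)) ?_
    have heq : (⟨g n z + g n w, hmem⟩ : (d₀ n).domain)
        = ⟨g n z, hgdom n z⟩ + ⟨g n w, hgdom n w⟩ := by apply Subtype.ext; simp
    rw [heq, LinearPMap.map_add, hgd n z, hgd n w]
    rfl
  have hgsmul : ∀ (n : ℤ) (c : ℝ) (z : Z (n + 1)), g n (c • z) = c • g n z := by
    intro n c z
    symm
    have hmem : c • g n z ∈ (d₀ n).domain := Submodule.smul_mem _ c (hgdom n z)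
    refine huniq n (c • z) _ hmem (Submodule.smul_mem _ c (hgperp n z)) ?_
    have heq : (⟨c • g n z, hmem⟩ : (d₀ n).domain)
        = c • (⟨g n z, hgdom n z⟩ : (d₀ n).domain) := by apply Subtype.ext; simp
    rw [heq, LinearPMap.map_smul, hgd n z]
    rfl
  let Glm : ∀ n : ℤ, Z (n + 1) →ₗ[ℝ] C₀ n := fun n =>
    { toFun := g n, map_add' := hgadd n, map_smul' := hgsmul n }
  -- `g n` is continuous, by the closed graph theorem
  have hGc : ∀ n, Continuous (g n) := by
    intro n
    haveI := hZcs (n + 1)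
    have hset : ((Glm n).graph : Set (Z (n + 1) × C₀ n)) =
        ((fun p : Z (n + 1) × C₀ n => (p.2, (p.1 : C₀ (n + 1)))) ⁻¹'
          ((d₀ n).graph : Set (C₀ n × C₀ (n + 1)))) ∩
        ((fun p : Z (n + 1) × C₀ n => p.2) ⁻¹' ((Z n)ᗮ : Set (C₀ n))) := by
      ext p
      simp only [SetLike.mem_coe, LinearMap.mem_graph_iff, Set.mem_inter_iff,
        Set.mem_preimage, LinearPMap.mem_graph_iff]
      constructor
      · intro h
        have h' : p.2 = g n p.1 := h
        refine ⟨⟨⟨g n p.1, hgdom n p.1⟩, by simp [h'], by simpa using hgd n p.1⟩, ?_⟩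
        rw [h']; exact hgperp n p.1
      · rintro ⟨⟨w, hw1, hw2⟩, hperp⟩
        show p.2 = g n p.1
        have := huniq n p.1 (w : C₀ n) w.2 (hw1 ▸ hperp) (by
          show d₀ n ⟨(w : C₀ n), w.2⟩ = (p.1 : C₀ (n + 1))
          rw [show (⟨(w : C₀ n), w.2⟩ : (d₀ n).domain) = w from Subtype.ext rfl]
          exact hw2)
        rw [← hw1]; exact this
    have hcl : IsClosed ((Glm n).graph : Set (Z (n + 1) × C₀ n)) := by
      rw [hset]
      exact (IsClosed.preimage
          (continuous_snd.prodMk (continuous_subtype_val.comp continuous_fst))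
          (hclosed₀ n)).inter
        (IsClosed.preimage continuous_snd (Z n).isClosed_orthogonal)
    exact (Glm n).continuous_of_isClosed_graph hcl
  -- the contracting homotopy `H` and the degree-shifting map `T = f ∘ H`
  let G : ∀ n : ℤ, Z (n + 1) →L[ℝ] C₀ n := fun n => ⟨Glm n, hGc n⟩
  let H : ∀ n : ℤ, C₀ (n + 1) →L[ℝ] C₀ n := fun n => (G n).comp (P (n + 1))
  let T : ∀ n : ℤ, C₀ (n + 1) →L[ℝ] C₁ n := fun n => (f n).comp (H n)
  have hHval : ∀ (n : ℤ) (x : C₀ (n + 1)), H n x = g n (P (n + 1) x) := fun n x => rfl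
  have hHdom : ∀ (n : ℤ) (x : C₀ (n + 1)), H n x ∈ (d₀ n).domain :=
    fun n x => hgdom n (P (n + 1) x)
  have hTval : ∀ (n : ℤ) (x : C₀ (n + 1)), T n x = f n (H n x) := fun n x => rfl
  have hTdom : ∀ (n : ℤ) (x : C₀ (n + 1)), T n x ∈ (d₁ n).domain :=
    fun n x => hfdom n (H n x) (hHdom n x)
  -- the shear isomorphism
  let φ : ∀ n : ℤ, (C₀ (n + 1) × C₁ n) ≃L[ℝ] (C₀ (n + 1) × C₁ n) := fun n =>
    { toFun := fun p => (p.1, p.2 + T n p.1)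
      invFun := fun p => (p.1, p.2 - T n p.1)
      map_add' := by
        intro p q
        refine Prod.ext rfl ?_
        show (p.2 + q.2) + T n (p.1 + q.1) = (p.2 + T n p.1) + (q.2 + T n q.1)
        rw [map_add]; abel
      map_smul' := by
        intro c p
        refine Prod.ext rfl ?_
        show c • p.2 + T n (c • p.1) = c • (p.2 + T n p.1)
        rw [map_smul, smul_add]
      left_inv := by intro p; simp
      right_inv := by intro p; simp
      continuous_toFun :=
        continuous_fst.prodMk (continuous_snd.add ((T n).continuous.comp continuous_fst))
      continuous_invFun :=
        continuous_fst.prodMk (continuous_snd.sub ((T n).continuous.comp continuous_fst)) }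
  refine ⟨φ, ?_⟩
  intro n x y hx hy
  haveI := hZcs (n + 1)
  haveI := hZcs (n + 1 + 1)
  have hTx : T n x ∈ (d₁ n).domain := hTdom n x
  refine ⟨hx, add_mem hy hTx, hx, sub_mem hy hTx, ?_⟩
  -- the image of `d₀` lies in the kernel in the next degree
  set a₀ : C₀ (n + 1 + 1) := (d₀ (n + 1)) ⟨x, hx⟩ with ha₀
  have haZ : a₀ ∈ Z (n + 1 + 1) := hmemZ (n + 1) ⟨x, hx⟩
  -- `w'` is the canonical preimage of `a₀`
  set w' : C₀ (n + 1) := g (n + 1) ⟨a₀, haZ⟩ with hw'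
  have hw'dom : w' ∈ (d₀ (n + 1)).domain := hgdom (n + 1) ⟨a₀, haZ⟩
  have hw'd : d₀ (n + 1) ⟨w', hw'dom⟩ = a₀ := hgd (n + 1) ⟨a₀, haZ⟩
  -- `x - w'` is in the kernel, hence `P x = x - w'`
  have hxw : x - w' ∈ Z (n + 1) := by
    refine (memZ (n + 1) _).mpr ⟨sub_mem hx hw'dom, ?_⟩
    have heq : (⟨x - w', sub_mem hx hw'dom⟩ : (d₀ (n + 1)).domain)
        = ⟨x, hx⟩ - ⟨w', hw'dom⟩ := by apply Subtype.ext; simp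
    rw [heq, LinearPMap.map_sub, hw'd, ← ha₀, sub_self]
  have hPx : ((P (n + 1) x : Z (n + 1)) : C₀ (n + 1)) = x - w' := by
    have hx' : x = (x - w') + w' := by abel
    have h1 : P (n + 1) x = P (n + 1) (x - w') + P (n + 1) w' := by
      rw [← map_add, sub_add_cancel]
    have h2 : P (n + 1) (x - w') = ⟨x - w', hxw⟩ :=
      Submodule.orthogonalProjectionOnto_mem_subspace_eq_self (⟨x - w', hxw⟩ : Z (n + 1))
    have h3 : P (n + 1) w' = 0 :=
      Submodule.orthogonalProjectionOnto_apply_of_mem_orthogonal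
        (hgperp (n + 1) ⟨a₀, haZ⟩)
    rw [h1, h2, h3, add_zero]
  -- value of `d₁` on `T n x`
  have hdTx : d₁ n ⟨T n x, hTx⟩ = f (n + 1) ((P (n + 1) x : Z (n + 1)) : C₀ (n + 1)) := by
    have h1 := hfcomm n (H n x) (hHdom n x)
    have heq : (⟨T n x, hTx⟩ : (d₁ n).domain)
        = ⟨f n (H n x), hfdom n (H n x) (hHdom n x)⟩ := Subtype.ext rfl
    rw [heq, h1]
    congr 1
    exact hgd n (P (n + 1) x)
  -- value of `T (n+1)` on `-a₀`
  have hTa : T (n + 1) (-a₀) = -(f (n + 1) w') := by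
    rw [map_neg]
    congr 1
    rw [hTval (n + 1) a₀]
    congr 1
    rw [hHval (n + 1) a₀]
    congr 1
    exact Submodule.orthogonalProjectionOnto_mem_subspace_eq_self (⟨a₀, haZ⟩ : Z (n + 1 + 1))
  -- now the intertwining identity
  have hfst : (φ (n + 1) (-(d₀ (n + 1)) ⟨x, hx⟩, f (n + 1) x + (d₁ n) ⟨y, hy⟩)).1
      = -(d₀ (n + 1)) ⟨(φ n (x, y)).1, hx⟩ := rfl
  have hsnd : (φ (n + 1) (-(d₀ (n + 1)) ⟨x, hx⟩, f (n + 1) x + (d₁ n) ⟨y, hy⟩)).2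
      = (d₁ n) ⟨(φ n (x, y)).2, add_mem hy hTx⟩ := by
    show f (n + 1) x + (d₁ n) ⟨y, hy⟩ + T (n + 1) (-a₀) = (d₁ n) ⟨y + T n x, add_mem hy hTx⟩
    have heq : (⟨y + T n x, add_mem hy hTx⟩ : (d₁ n).domain)
        = ⟨y, hy⟩ + ⟨T n x, hTx⟩ := by apply Subtype.ext; simp
    rw [heq, LinearPMap.map_add, hdTx, hPx, hTa, map_sub]
    abel
  exact Prod.ext hfst hsnd
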